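/- Let τ ≥ 2. The clock with parameter τ (the conjunctive network with firing memory on the complete graph K_{τ+1} with maximum delay dt_i = τ at every node) admits an attractor of period τ + 1: the configuration y whose node i is, in delay notation, in state i (node 0 in pair state (0,0), node i ≥ 1 in pair state (1,i)) is periodic under Φ with minimal period exactly τ + 1. -/

import Mathlib

open Classical in
/-- The conjunctive network on a finite simple graph `G`:
`F(x)_i = ⋀_{j adjacent to i} x_j`. -/
noncomputable def conjNet {V : Type*} [Fintype V] (G : SimpleGraph V)
    (x : V → Bool) : V → Bool :=
  fun i => if ∀ j, G.Adj i j → x j = true then true else false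

/-- One step of the conjunctive network with firing memory on `G` with
maximum delays `dt`.  A configuration assigns to each node a pair
`(xᵢ, Δᵢ)` of a Boolean state and a delay. -/
noncomputable def fmStep {V : Type*} [Fintype V] (G : SimpleGraph V) (dt : V → ℕ)
    (y : V → Bool × ℕ) : V → Bool × ℕ :=
  fun i =>
    let f := conjNet G (fun j => (y j).1) i
    let d : ℕ := if f = true then dt i else (y i).2 - 1
    (if 1 ≤ d then true else f, d)

open Fin.CommRing

lemma fmStep_of_true {V : Type*} [Fintype V] (G : SimpleGraph V) (dt : V → ℕ)
    (y : V → Bool × ℕ) (i : V) (h : conjNet G (fun j => (y j).1) i = true) :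
    fmStep G dt y i = (if 1 ≤ dt i then true else true, dt i) := by
  simp [fmStep, h]

lemma fmStep_of_false {V : Type*} [Fintype V] (G : SimpleGraph V) (dt : V → ℕ)
    (y : V → Bool × ℕ) (i : V) (h : conjNet G (fun j => (y j).1) i = false) :
    fmStep G dt y i = (if 1 ≤ (y i).2 - 1 then true else false, (y i).2 - 1) := by
  simp [fmStep, h]

/-- The rotating clock configuration with "dead" node `k`. -/
noncomputable def clockCfg (τ : ℕ) (k : Fin (τ + 1)) : Fin (τ + 1) → Bool × ℕ :=
  fun j => if j = k then (false, 0) else (true, ((j - k : Fin (τ + 1)) : ℕ))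

lemma val_one_fin (τ : ℕ) (hτ : 2 ≤ τ) : ((1 : Fin (τ + 1)) : ℕ) = 1 := by
  rw [Fin.val_one']
  exact Nat.mod_eq_of_lt (by omega)

lemma clockCfg_step (τ : ℕ) (hτ : 2 ≤ τ) (k : Fin (τ + 1)) :
    fmStep (⊤ : SimpleGraph (Fin (τ + 1))) (fun _ => τ) (clockCfg τ k)
      = clockCfg τ (k + 1) := by
  have hone : (1 : Fin (τ + 1)) ≠ 0 := by
    intro h
    have := congrArg Fin.val h
    rw [val_one_fin τ hτ, Fin.val_zero] at this
    omega
  funext i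
  by_cases hik : i = k
  · subst hik
    have hf : conjNet (⊤ : SimpleGraph (Fin (τ + 1))) (fun j => (clockCfg τ i j).1) i = true := by
      have hall : ∀ j, (⊤ : SimpleGraph (Fin (τ + 1))).Adj i j → (clockCfg τ i j).1 = true := by
        intro j hj
        simp only [SimpleGraph.top_adj] at hj
        simp [clockCfg, Ne.symm hj]
      simp only [conjNet]
      rw [if_pos hall]
    rw [fmStep_of_true _ _ _ _ hf]
    have hne : i ≠ i + 1 := by
      intro h
      apply hone
      have := congrArg (· - i) h
      simpa [sub_self, add_sub_cancel_left] using this.symm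
    have hsub : i - (i + 1) = (-1 : Fin (τ + 1)) := by ring
    simp [clockCfg, hne, hsub, Fin.coe_neg_one, show 1 ≤ τ by omega]
  · have hf : conjNet (⊤ : SimpleGraph (Fin (τ + 1))) (fun j => (clockCfg τ k j).1) i = false := by
      simp only [conjNet]
      rw [if_neg]
      intro hall
      have := hall k (by simp [SimpleGraph.top_adj, hik])
      simp [clockCfg] at this
    rw [fmStep_of_false _ _ _ _ hf]
    have hval : (clockCfg τ k i).2 = ((i - k : Fin (τ + 1)) : ℕ) := by simp [clockCfg, hik]
    by_cases hik1 : i = k + 1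
    · subst hik1
      have h1 : ((k + 1 - k : Fin (τ + 1)) : ℕ) = 1 := by
        have : (k + 1 - k : Fin (τ + 1)) = 1 := by ring
        rw [this, val_one_fin τ hτ]
      rw [hval, h1]
      simp [clockCfg]
    · have hik' : i - k ≠ 0 := fun h => hik (by simpa [sub_eq_zero] using h)
      have hik1' : i - k ≠ 1 := by
        intro h
        apply hik1
        have := congrArg (· + k) h
        simpa [sub_add_cancel, add_comm] using this
      have hv0 : ((i - k : Fin (τ + 1)) : ℕ) ≠ 0 := fun h => hik' (Fin.ext (by simpa using h))
      have hv1 : ((i - k : Fin (τ + 1)) : ℕ) ≠ 1 := by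
        intro h
        apply hik1'
        apply Fin.ext
        rw [h, val_one_fin τ hτ]
      have hsub : i - (k + 1) = (i - k) - 1 := by ring
      have hvsub : ((i - (k + 1) : Fin (τ + 1)) : ℕ) = ((i - k : Fin (τ + 1)) : ℕ) - 1 := by
        rw [hsub, Fin.coe_sub_one, if_neg hik']
      rw [hval]
      rw [if_pos (by omega)]
      simp only [clockCfg, if_neg hik1, hvsub]

lemma clockCfg_iterate (τ : ℕ) (hτ : 2 ≤ τ) (m : ℕ) :
    (fmStep (⊤ : SimpleGraph (Fin (τ + 1))) (fun _ => τ))^[m] (clockCfg τ 0)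
      = clockCfg τ (m : Fin (τ + 1)) := by
  induction m with
  | zero => simp
  | succ n ih =>
      rw [Function.iterate_succ_apply', ih, clockCfg_step τ hτ]
      push_cast
      ring_nf


theorem clock_attractor (τ : ℕ) (hτ : 2 ≤ τ) :
    Function.IsPeriodicPt (fmStep (⊤ : SimpleGraph (Fin (τ + 1))) (fun _ => τ)) (τ + 1)
      (fun j : Fin (τ + 1) =>
        if (j : ℕ) = 0 then ((false, 0) : Bool × ℕ) else (true, (j : ℕ))) ∧
    Function.minimalPeriod (fmStep (⊤ : SimpleGraph (Fin (τ + 1))) (fun _ => τ))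
      (fun j : Fin (τ + 1) =>
        if (j : ℕ) = 0 then ((false, 0) : Bool × ℕ) else (true, (j : ℕ))) = τ + 1 := by
  have hcfg : (fun j : Fin (τ + 1) =>
      if (j : ℕ) = 0 then ((false, 0) : Bool × ℕ) else (true, (j : ℕ))) = clockCfg τ 0 := by
    funext j
    simp only [clockCfg, sub_zero]
    by_cases h : j = 0
    · simp [h]
    · have : (j : ℕ) ≠ 0 := fun hh => h (Fin.ext (by simpa using hh))
      simp [this, h]
  rw [hcfg]
  have hper : Function.IsPeriodicPt
      (fmStep (⊤ : SimpleGraph (Fin (τ + 1))) (fun _ => τ)) (τ + 1) (clockCfg τ 0) := by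
    unfold Function.IsPeriodicPt Function.IsFixedPt
    rw [clockCfg_iterate τ hτ]
    norm_num
  refine ⟨hper, ?_⟩
  have hdvd := Function.IsPeriodicPt.minimalPeriod_dvd hper
  set p := Function.minimalPeriod (fmStep (⊤ : SimpleGraph (Fin (τ + 1))) (fun _ => τ))
      (clockCfg τ 0) with hp
  have hppos : 0 < p := Function.IsPeriodicPt.minimalPeriod_pos (by omega) hper
  have hple : p ≤ τ + 1 := Nat.le_of_dvd (by omega) hdvd
  rcases lt_or_eq_of_le hple with hlt | heq
  · exfalso
    have hperp : Function.IsPeriodicPt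
        (fmStep (⊤ : SimpleGraph (Fin (τ + 1))) (fun _ => τ)) p (clockCfg τ 0) :=
      Function.isPeriodicPt_minimalPeriod _ _
    unfold Function.IsPeriodicPt Function.IsFixedPt at hperp
    rw [clockCfg_iterate τ hτ] at hperp
    have h0 := congrFun hperp (0 : Fin (τ + 1))
    have hpne : ((p : Fin (τ + 1))) ≠ 0 := by
      intro h
      have h2 := congrArg Fin.val h
      rw [Fin.val_natCast, Fin.val_zero] at h2
      rw [Nat.mod_eq_of_lt hlt] at h2
      omega
    simp only [clockCfg, if_neg (Ne.symm hpne), if_pos rfl] at h0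
    exact Bool.noConfusion (congrArg Prod.fst h0)
  · exact heq
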